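/- The assignment g ↦ g·Oⁿ (the O-submodule of Oⁿ generated by the columns of g) induces a bijection from the set of n×n matrices g over O with det g ≠ 0, taken modulo right multiplication by GL_n(O), onto the set of O-submodules R of Oⁿ with dim_k(Oⁿ/R) finite. In particular, if g and g' are two such matrices with g·Oⁿ = g'·Oⁿ, then det g' = c·det g for some nonzero scalar c ∈ k. -/

import Mathlib

open Polynomial

set_option maxRecDepth 8000

private theorem stmt10.sum_single (k : Type*) [Field k] (n : ℕ) (x : Fin n → k[X]) :
    x = ∑ i, x i • (Pi.single i 1 : Fin n → k[X]) := by
  funext j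
  simp [Finset.sum_apply, Pi.single_apply, smul_eq_mul, mul_ite]

/-- If `d • ⊤ ≤ R` for some `d ≠ 0`, then the quotient is finite over `k`. -/
private theorem stmt10.lemA (k : Type*) [Field k] (n : ℕ) (d : k[X]) (hd : d ≠ 0)
    (R : Submodule k[X] (Fin n → k[X])) (hR : ∀ x, d • x ∈ R) :
    Module.Finite k ((Fin n → k[X]) ⧸ R) := by
  classical
  set p : Submodule k[X] (Fin n → k[X]) :=
    Submodule.pi Set.univ (fun _ : Fin n => Ideal.span {d}) with hp
  have hpR : p ≤ R := by
    intro x hx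
    have h1 : ∀ i, ∃ c, x i = d * c := by
      intro i
      obtain ⟨c, hc⟩ := Ideal.mem_span_singleton'.mp (hx i trivial)
      exact ⟨c, hc.symm.trans (mul_comm _ _)⟩
    choose c hc using h1
    have : x = d • c := funext fun i => by simp [hc i, Pi.smul_apply, smul_eq_mul]
    rw [this]; exact hR c
  haveI : Module.Finite k (k[X] ⧸ (Ideal.span {d} : Ideal k[X])) :=
    (AdjoinRoot.powerBasis hd).finite
  haveI : Module.Finite k ((Fin n → k[X]) ⧸ p) := by
    have e := Submodule.quotientPi (fun _ : Fin n => (Ideal.span {d} : Submodule k[X] k[X]))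
    exact Module.Finite.equiv (e.restrictScalars k).symm
  let f : ((Fin n → k[X]) ⧸ p) →ₗ[k[X]] ((Fin n → k[X]) ⧸ R) :=
    Submodule.mapQ p R LinearMap.id hpR
  have hf : Function.Surjective f := by
    intro y
    obtain ⟨x, rfl⟩ := Submodule.Quotient.mk_surjective R y
    exact ⟨Submodule.Quotient.mk x, by rw [Submodule.mapQ_apply]; rfl⟩
  exact Module.Finite.of_surjective (f.restrictScalars k) hf

/-- If the quotient is finite over `k`, it is a torsion `k[X]`-module. -/
private theorem stmt10.lemB (k : Type*) [Field k] (n : ℕ) (R : Submodule k[X] (Fin n → k[X]))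
    (hfin : Module.Finite k ((Fin n → k[X]) ⧸ R)) :
    ∃ d : k[X], d ≠ 0 ∧ ∀ x, d • x ∈ R := by
  classical
  have key : ∀ i : Fin n, ∃ f : k[X], f ≠ 0 ∧ f • (Pi.single i 1 : Fin n → k[X]) ∈ R := by
    intro i
    by_contra h
    push_neg at h
    let φ : k[X] →ₗ[k] ((Fin n → k[X]) ⧸ R) :=
      { toFun := fun f => Submodule.Quotient.mk (f • (Pi.single i 1 : Fin n → k[X]))
        map_add' := fun a b => by simp only [add_smul, Submodule.Quotient.mk_add]
        map_smul' := fun c a => by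
          simp only [RingHom.id_apply]
          rw [smul_assoc, Submodule.Quotient.mk_smul] }
    have hinj : Function.Injective φ := by
      rw [injective_iff_map_eq_zero]
      intro f hf
      by_contra hf0
      exact h f hf0 ((Submodule.Quotient.mk_eq_zero R).mp hf)
    haveI : IsNoetherian k ((Fin n → k[X]) ⧸ R) := inferInstance
    exact Polynomial.not_finite (R := k) (Module.Finite.of_injective φ hinj)
  choose f hf0 hfR using key
  refine ⟨∏ i, f i, Finset.prod_ne_zero_iff.mpr fun i _ => hf0 i, ?_⟩
  have hsingle : ∀ i : Fin n, (∏ j, f j) • (Pi.single i 1 : Fin n → k[X]) ∈ R := by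
    intro i
    have : (∏ j, f j) = (∏ j ∈ Finset.univ.erase i, f j) * f i := by
      rw [mul_comm, Finset.mul_prod_erase _ _ (Finset.mem_univ i)]
    rw [this, mul_smul]
    exact Submodule.smul_mem R _ (hfR i)
  intro x
  have hx := stmt10.sum_single k n x
  have : (∏ j, f j) • x = ∑ i, x i • ((∏ j, f j) • (Pi.single i 1 : Fin n → k[X])) := by
    conv_lhs => rw [hx]
    rw [Finset.smul_sum]
    exact Finset.sum_congr rfl fun i _ => smul_comm _ _ _
  rw [this]
  exact Submodule.sum_mem R fun i _ => Submodule.smul_mem R _ (hsingle i)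

/-- Every `R` with torsion quotient is the column span of a matrix with nonzero determinant. -/
private theorem stmt10.lemC (k : Type*) [Field k] (n : ℕ) (R : Submodule k[X] (Fin n → k[X]))
    (d : k[X]) (hd : d ≠ 0) (hdR : ∀ x, d • x ∈ R) :
    ∃ g : Matrix (Fin n) (Fin n) k[X], g.det ≠ 0 ∧ LinearMap.range g.mulVecLin = R := by
  classical
  haveI : Module.Finite k[X] R := Module.Finite.iff_fg.mpr (IsNoetherian.noetherian R)
  have hrank : Module.rank k[X] R = n := by
    have h1 : Module.rank k[X] R ≤ n := by
      have := R.rank_le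
      rwa [rank_fin_fun] at this
    have h2 : (n : Cardinal) ≤ Module.rank k[X] R := by
      let ψ : (Fin n → k[X]) →ₗ[k[X]] R :=
        { toFun := fun x => ⟨d • x, hdR x⟩
          map_add' := fun a b => Subtype.ext (smul_add d a b)
          map_smul' := fun c a => Subtype.ext (smul_comm d c a) }
      have hinj : Function.Injective ψ := by
        intro a b hab
        have : d • a = d • b := congrArg Subtype.val hab
        exact smul_right_injective _ hd this
      have := LinearMap.rank_le_of_injective ψ hinj
      rwa [rank_fin_fun] at this
    exact le_antisymm h1 h2
  have hfr : Module.finrank k[X] R = n := Module.finrank_eq_of_rank_eq hrank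
  let b : Module.Basis (Fin n) k[X] R := Module.finBasisOfFinrankEq k[X] R hfr
  let g : Matrix (Fin n) (Fin n) k[X] := Matrix.of fun i j => (b j : Fin n → k[X]) i
  have hrange : LinearMap.range g.mulVecLin = R := by
    rw [Matrix.range_mulVecLin]
    have h : Set.range g.col = ⇑R.subtype '' Set.range (fun j => b j) := by
      ext v
      constructor
      · rintro ⟨j, rfl⟩; exact ⟨b j, ⟨j, rfl⟩, rfl⟩
      · rintro ⟨w, ⟨j, rfl⟩, rfl⟩; exact ⟨j, rfl⟩
    rw [h, ← Submodule.map_span, b.span_eq, Submodule.map_top, Submodule.range_subtype]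
  refine ⟨g, ?_, hrange⟩
  intro hdet
  obtain ⟨v, hv0, hgv⟩ := (Matrix.exists_mulVec_eq_zero_iff).mpr hdet
  have hsum : ∑ j, v j • b j = 0 := by
    apply Subtype.val_injective
    push_cast
    funext i
    rw [Finset.sum_apply]
    have := congrFun hgv i
    simpa [Matrix.mulVec, dotProduct, g, Finset.sum_apply, mul_comm] using this
  have := Fintype.linearIndependent_iff.mp b.linearIndependent v hsum
  exact hv0 (funext this)

/-- Cancellation for matrices with nonzero determinant over a polynomial ring. -/
private theorem stmt10.lemD {K : Type*} [Field K] {n : ℕ} (g A B : Matrix (Fin n) (Fin n) K[X])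
    (hg : g.det ≠ 0) (h : g * A = g * B) : A = B := by
  have h2 : g.adjugate * (g * A) = g.adjugate * (g * B) := by rw [h]
  rw [← mul_assoc, ← mul_assoc, Matrix.adjugate_mul, Matrix.smul_mul, Matrix.smul_mul,
    one_mul, one_mul] at h2
  refine Matrix.ext fun i j => ?_
  exact mul_left_cancel₀ hg (by simpa using congrFun (congrFun h2 i) j)

private theorem stmt10.lemE (k : Type*) [Field k] (n : ℕ) (g g' : Matrix (Fin n) (Fin n) k[X])
    (hg : g.det ≠ 0) (hg' : g'.det ≠ 0) :
    LinearMap.range g.mulVecLin = LinearMap.range g'.mulVecLin ↔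
      ∃ u : Matrix (Fin n) (Fin n) k[X], IsUnit u.det ∧ g' = g * u := by
  classical
  constructor
  · intro hr
    have key : ∀ (a b : Matrix (Fin n) (Fin n) k[X]),
        LinearMap.range a.mulVecLin = LinearMap.range b.mulVecLin →
        ∃ u, a * u = b := by
      intro a b hab
      have hcol : ∀ j, ∃ v, a.mulVec v = fun i => b i j := by
        intro j
        have : (fun i => b i j) ∈ LinearMap.range b.mulVecLin := by
          refine ⟨Pi.single j 1, ?_⟩
          simp only [Matrix.mulVecLin_apply, Matrix.mulVec_single_one]
          rfl
        rw [← hab] at this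
        exact this
      choose v hv using hcol
      refine ⟨Matrix.of fun i j => v j i, Matrix.ext fun i j => ?_⟩
      rw [Matrix.mul_apply]
      have := congrFun (hv j) i
      simpa [Matrix.mulVec, dotProduct] using this
    obtain ⟨u, hu⟩ := key g g' hr
    obtain ⟨u', hu'⟩ := key g' g hr.symm
    have huu' : u * u' = 1 := by
      apply stmt10.lemD g _ _ hg
      rw [← mul_assoc, hu, hu', mul_one]
    have hdetu : u.det * u'.det = 1 := by rw [← Matrix.det_mul, huu', Matrix.det_one]
    exact ⟨u, IsUnit.of_mul_eq_one _ hdetu, hu.symm⟩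
  · rintro ⟨u, hu, rfl⟩
    rw [Matrix.mulVecLin_mul]
    refine (LinearMap.range_comp_of_range_eq_top _ ?_).symm
    rw [LinearMap.range_eq_top]
    intro y
    refine ⟨(u⁻¹).mulVec y, ?_⟩
    rw [Matrix.mulVecLin_apply, Matrix.mulVec_mulVec, Matrix.mul_nonsing_inv _ hu,
      Matrix.one_mulVec]

theorem stmt10 (k : Type*) [Field k] (n : ℕ) :
    (∀ g : Matrix (Fin n) (Fin n) (Polynomial k), g.det ≠ 0 →
      Module.Finite k ((Fin n → Polynomial k) ⧸ LinearMap.range g.mulVecLin)) ∧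
    (∀ R : Submodule (Polynomial k) (Fin n → Polynomial k),
      Module.Finite k ((Fin n → Polynomial k) ⧸ R) →
      ∃ g : Matrix (Fin n) (Fin n) (Polynomial k), g.det ≠ 0 ∧
        LinearMap.range g.mulVecLin = R) ∧
    (∀ g g' : Matrix (Fin n) (Fin n) (Polynomial k), g.det ≠ 0 → g'.det ≠ 0 →
      (LinearMap.range g.mulVecLin = LinearMap.range g'.mulVecLin ↔
        ∃ u : Matrix (Fin n) (Fin n) (Polynomial k), IsUnit u.det ∧ g' = g * u)) ∧
    (∀ g g' : Matrix (Fin n) (Fin n) (Polynomial k), g.det ≠ 0 → g'.det ≠ 0 →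
      LinearMap.range g.mulVecLin = LinearMap.range g'.mulVecLin →
      ∃ c : k, c ≠ 0 ∧ g'.det = Polynomial.C c * g.det) := by
  refine ⟨?_, ?_, ?_, ?_⟩
  · intro g hg
    refine stmt10.lemA k n g.det hg _ ?_
    intro x
    refine ⟨g.adjugate.mulVec x, ?_⟩
    rw [Matrix.mulVecLin_apply, Matrix.mulVec_mulVec, Matrix.mul_adjugate,
      Matrix.smul_mulVec, Matrix.one_mulVec]
  · intro R hR
    obtain ⟨d, hd, hdR⟩ := stmt10.lemB k n R hR
    exact stmt10.lemC k n R d hd hdR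
  · exact stmt10.lemE k n
  · intro g g' hg hg' hr
    obtain ⟨u, hu, rfl⟩ := (stmt10.lemE k n g g' hg hg').mp hr
    obtain ⟨c, hc, hcu⟩ := Polynomial.isUnit_iff.mp hu
    exact ⟨c, hc.ne_zero, by rw [Matrix.det_mul, ← hcu, mul_comm]⟩
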